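/- arXiv:2010.00886 — 3 statements merged into one kernel-verified Lean document; each statement's English description precedes it below -/
import Mathlib

section
/- If G is a finite simple subcubic graph of order n ≥ 2, then the exponential independence number of G satisfies α_e(G) ≥ n / (3·2^6·(log n)^2) = n / (192·(log n)^2). -/
open SimpleGraph
open scoped Classical

/-- The graph obtained from `G` by deleting the vertices of `A`
(they are kept as isolated vertices, which does not affect adjacency or distances
among the remaining vertices). -/
def SimpleGraph.deleteSet {V : Type*} (G : SimpleGraph V) (A : Set V) : SimpleGraph V where
  Adj x y := G.Adj x y ∧ x ∉ A ∧ y ∉ A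
  symm := ⟨fun _ _ ⟨h, hx, hy⟩ => ⟨h.symm, hy, hx⟩⟩
  loopless := ⟨fun x ⟨h, _, _⟩ => G.loopless.irrefl x h⟩

/-- `dist_{(G,S)}(u,v)`: the distance between `u` and `v` in `G - (S \ {u,v})`,
with value `⊤` if `u` and `v` lie in different components of that graph. -/
noncomputable def distDel {V : Type*} (G : SimpleGraph V) (S : Set V) (u v : V) : ℕ∞ :=
  (G.deleteSet (S \ {u, v})).edist u v

/-- `w_{(G,S)}(u) = Σ_{v ∈ S} (1/2)^{dist_{(G,S)}(u,v) - 1}` for a finite set `S`,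
where a summand with infinite distance equals `0`. -/
noncomputable def expW {V : Type*} (G : SimpleGraph V) (S : Finset V) (u : V) : ℝ :=
  ∑ v ∈ S, if distDel G (↑S) u v = ⊤ then 0
    else 2 * (1 / 2 : ℝ) ^ (distDel G (↑S) u v).toNat

/-- `S` is exponentially independent in `G`: `w_{(G,S∖{u})}(u) < 1` for every `u ∈ S`. -/
def ExpIndep {V : Type*} (G : SimpleGraph V) (S : Finset V) : Prop :=
  ∀ u ∈ S, expW G (S.erase u) u < 1

/-- The exponential independence number of `G`: the maximum cardinality of an
exponentially independent set in `G`. -/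
noncomputable def expIndepNum (V : Type*) [Fintype V] (G : SimpleGraph V) : ℕ :=
  sSup {m : ℕ | ∃ S : Finset V, ExpIndep G S ∧ S.card = m}

/-! ### Auxiliary development -/

namespace ExpIndepAux

open Finset

variable {V : Type*} [Fintype V]

/-- The weight term based on distances in `G` itself. -/
noncomputable def tG (G : SimpleGraph V) (u v : V) : ℝ :=
  if G.edist u v = ⊤ then 0 else 2 * (1 / 2 : ℝ) ^ (G.edist u v).toNat

lemma tG_nonneg (G : SimpleGraph V) (u v : V) : 0 ≤ tG G u v := by
  unfold tG; split
  · exact le_rfl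
  · positivity

lemma tG_comm (G : SimpleGraph V) (u v : V) : tG G u v = tG G v u := by
  unfold tG; rw [SimpleGraph.edist_comm]

lemma deleteSet_le (G : SimpleGraph V) (A : Set V) : G.deleteSet A ≤ G :=
  fun _ _ h => h.1

/-- The term appearing in `expW` is at most `tG`. -/
lemma term_le_tG (G : SimpleGraph V) (A : Set V) (u v : V) :
    (if distDel G A u v = ⊤ then 0
      else 2 * (1 / 2 : ℝ) ^ (distDel G A u v).toNat) ≤ tG G u v := by
  have hle : G.edist u v ≤ distDel G A u v :=
    SimpleGraph.edist_anti (deleteSet_le G _)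
  by_cases h : distDel G A u v = ⊤
  · simp only [h, if_pos rfl]
    exact tG_nonneg G u v
  · have hG : G.edist u v ≠ ⊤ := fun hG => h (top_le_iff.mp (hG ▸ hle))
    have htn : (G.edist u v).toNat ≤ (distDel G A u v).toNat :=
      ENat.toNat_le_toNat hle h
    simp only [if_neg h]
    unfold tG
    rw [if_neg hG]
    have := pow_le_pow_of_le_one (by norm_num : (0:ℝ) ≤ 1/2)
      (by norm_num : (1/2:ℝ) ≤ 1) htn
    linarith

lemma expW_le_sum_tG (G : SimpleGraph V) (S : Finset V) (u : V) :
    expW G S u ≤ ∑ v ∈ S, tG G u v := by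
  unfold expW
  exact Finset.sum_le_sum fun v _ => term_le_tG G _ u v

/-- Sphere of radius `k` around `u`. -/
noncomputable def sph (G : SimpleGraph V) (u : V) (k : ℕ) : Finset V :=
  univ.filter (fun v => G.edist u v = (k : ℕ∞))

lemma mem_sph {G : SimpleGraph V} {u v : V} {k : ℕ} :
    v ∈ sph G u k ↔ G.edist u v = (k : ℕ∞) := by
  simp [sph]

/-- Every vertex at distance `k+1` has a neighbor at distance `k`. -/
lemma exists_pred (G : SimpleGraph V) {u x : V} {k : ℕ}
    (h : G.edist u x = ((k + 1 : ℕ) : ℕ∞)) :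
    ∃ y, G.Adj y x ∧ G.edist u y = (k : ℕ∞) := by
  obtain ⟨p, hp⟩ := SimpleGraph.exists_walk_of_edist_eq_coe h
  have hpr : p.reverse.length = k + 1 := by
    rw [SimpleGraph.Walk.length_reverse, hp]
  cases hq : p.reverse with
  | nil => rw [hq] at hpr; simp at hpr
  | cons hadj q =>
    rename_i y
    rw [hq] at hpr
    simp only [SimpleGraph.Walk.length_cons] at hpr
    have hqlen : q.length = k := by omega
    refine ⟨y, hadj.symm, ?_⟩
    have hle : G.edist u y ≤ (k : ℕ∞) := by
      have := SimpleGraph.edist_le q.reverse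
      rwa [SimpleGraph.Walk.length_reverse, hqlen] at this
    have hge : (k : ℕ∞) ≤ G.edist u y := by
      have ht : G.edist u x ≤ G.edist u y + G.edist y x :=
        SimpleGraph.edist_triangle
      have hyx : G.edist y x = 1 := SimpleGraph.edist_eq_one_iff_adj.mpr hadj.symm
      rw [h, hyx] at ht
      have : ((k : ℕ∞) + 1) ≤ G.edist u y + 1 := by
        calc ((k : ℕ∞) + 1) = ((k + 1 : ℕ) : ℕ∞) := by push_cast; ring
          _ ≤ G.edist u y + 1 := ht
      exact (ENat.add_le_add_iff_right (by simp)).mp this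
    exact le_antisymm hle hge

/-- degree bound as a Finset statement -/
lemma neighborFinset_card_le (G : SimpleGraph V)
    (hsub : ∀ v : V, (G.neighborSet v).ncard ≤ 3) (v : V) :
    (G.neighborFinset v).card ≤ 3 := by
  have := hsub v
  rwa [Set.ncard_eq_toFinset_card'] at this

/-- A vertex at distance `k+1` from `u` has at most two neighbors at distance `k+2`. -/
lemma children_le_two (G : SimpleGraph V)
    (hsub : ∀ v : V, (G.neighborSet v).ncard ≤ 3) (u y : V) (k m : ℕ)
    (hy : G.edist u y = ((k + 1 : ℕ) : ℕ∞)) (hm : m = k + 2) :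
    ((G.neighborFinset y).filter (fun x => G.edist u x = ((m : ℕ) : ℕ∞))).card ≤ 2 := by
  obtain ⟨z, hz, hzd⟩ := exists_pred G hy
  have hzmem : z ∈ G.neighborFinset y := by
    rw [SimpleGraph.mem_neighborFinset]; exact hz.symm
  have hznot : z ∉ (G.neighborFinset y).filter (fun x => G.edist u x = ((m : ℕ) : ℕ∞)) := by
    intro hcon
    rw [Finset.mem_filter] at hcon
    have := hcon.2
    rw [hzd] at this
    have : k = m := by exact_mod_cast this
    omega
  have hsubs : (G.neighborFinset y).filter (fun x => G.edist u x = ((m : ℕ) : ℕ∞))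
      ⊆ (G.neighborFinset y).erase z := by
    intro x hx
    rw [Finset.mem_erase]
    refine ⟨?_, (Finset.mem_filter.mp hx).1⟩
    intro hxz
    exact hznot (hxz ▸ hx)
  calc ((G.neighborFinset y).filter (fun x => G.edist u x = ((m : ℕ) : ℕ∞))).card
      ≤ ((G.neighborFinset y).erase z).card := Finset.card_le_card hsubs
    _ = (G.neighborFinset y).card - 1 := Finset.card_erase_of_mem hzmem
    _ ≤ 3 - 1 := by
        have := neighborFinset_card_le G hsub y
        omega
    _ = 2 := rfl

lemma sph_one_card (G : SimpleGraph V)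
    (hsub : ∀ v : V, (G.neighborSet v).ncard ≤ 3) (u : V) :
    (sph G u 1).card ≤ 3 := by
  have hsubs : sph G u 1 ⊆ G.neighborFinset u := by
    intro v hv
    rw [mem_sph] at hv
    rw [SimpleGraph.mem_neighborFinset]
    exact SimpleGraph.edist_eq_one_iff_adj.mp (by exact_mod_cast hv)
  exact le_trans (Finset.card_le_card hsubs) (neighborFinset_card_le G hsub u)

lemma sph_step (G : SimpleGraph V)
    (hsub : ∀ v : V, (G.neighborSet v).ncard ≤ 3) (u : V) (k : ℕ) :
    (sph G u (k + 2)).card ≤ 2 * (sph G u (k + 1)).card := by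
  classical
  set f : V → V := fun x =>
    if h : ∃ y, G.Adj y x ∧ G.edist u y = ((k + 1 : ℕ) : ℕ∞) then h.choose else x with hf
  have hmaps : ∀ x ∈ sph G u (k + 2), f x ∈ sph G u (k + 1) ∧ G.Adj (f x) x := by
    intro x hx
    rw [mem_sph] at hx
    have hx' : G.edist u x = (((k + 1) + 1 : ℕ) : ℕ∞) := by
      rw [hx]
    have hex : ∃ y, G.Adj y x ∧ G.edist u y = ((k + 1 : ℕ) : ℕ∞) := exists_pred G hx'
    rw [hf]
    simp only [dif_pos hex]
    exact ⟨mem_sph.mpr hex.choose_spec.2, hex.choose_spec.1⟩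
  apply Finset.card_le_mul_card_image_of_maps_to (f := f) (fun x hx => (hmaps x hx).1)
  intro y _
  by_cases hy : y ∈ sph G u (k + 1)
  · have hy' : G.edist u y = ((k + 1 : ℕ) : ℕ∞) := mem_sph.mp hy
    have hfib : (sph G u (k + 2)).filter (fun x => f x = y)
        ⊆ (G.neighborFinset y).filter (fun x => G.edist u x = ((k + 2 : ℕ) : ℕ∞)) := by
      intro x hx
      rw [Finset.mem_filter] at hx
      obtain ⟨hx1, hx2⟩ := hx
      rw [Finset.mem_filter, SimpleGraph.mem_neighborFinset]
      exact ⟨hx2 ▸ (hmaps x hx1).2, mem_sph.mp hx1⟩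
    calc ((sph G u (k + 2)).filter (fun x => f x = y)).card
        ≤ _ := Finset.card_le_card hfib
      _ ≤ 2 := children_le_two G hsub u y k (k + 2) hy' rfl
  · have : (sph G u (k + 2)).filter (fun x => f x = y) = ∅ := by
      rw [Finset.filter_eq_empty_iff]
      intro x hx hxy
      exact hy (hxy ▸ (hmaps x hx).1)
    rw [this]; simp

lemma sph_card (G : SimpleGraph V)
    (hsub : ∀ v : V, (G.neighborSet v).ncard ≤ 3) (u : V) (k : ℕ) :
    (sph G u (k + 1)).card ≤ 3 * 2 ^ k := by
  induction k with
  | zero => simpa using sph_one_card G hsub u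
  | succ k ih =>
    calc (sph G u (k + 2)).card ≤ 2 * (sph G u (k + 1)).card := sph_step G hsub u k
      _ ≤ 2 * (3 * 2 ^ k) := by omega
      _ = 3 * 2 ^ (k + 1) := by ring

/-- The key potential bound: for any set `s` not containing `u`,
the total `tG`-weight of `s` seen from `u` is at most `3L + 1`. -/
lemma sum_tG_le (G : SimpleGraph V)
    (hsub : ∀ v : V, (G.neighborSet v).ncard ≤ 3) (L : ℕ)
    (hL : Fintype.card V ≤ 2 ^ L) (u : V) (s : Finset V) (hu : u ∉ s) :
    ∑ v ∈ s, tG G u v ≤ 3 * L + 1 := by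
  classical
  have hsplit := Finset.sum_filter_add_sum_filter_not s
    (fun v => G.edist u v ≤ (L : ℕ∞)) (fun v => tG G u v)
  rw [← hsplit]
  have hfar : ∑ v ∈ s.filter (fun v => ¬ G.edist u v ≤ (L : ℕ∞)), tG G u v ≤ 1 := by
    have hterm : ∀ v ∈ s.filter (fun v => ¬ G.edist u v ≤ (L : ℕ∞)),
        tG G u v ≤ ((2 : ℝ) ^ L)⁻¹ := by
      intro v hv
      rw [Finset.mem_filter] at hv
      have hgt := hv.2
      unfold tG
      by_cases htop : G.edist u v = ⊤
      · rw [if_pos htop]; positivity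
      · rw [if_neg htop]
        have hLt : (L : ℕ∞) < G.edist u v := lt_of_not_ge hgt
        have htn : L + 1 ≤ (G.edist u v).toNat := by
          have := ENat.toNat_le_toNat (Order.add_one_le_of_lt hLt) htop
          rwa [ENat.toNat_add (by simp) (by simp), ENat.toNat_coe, ENat.toNat_one] at this
        have hpow : ((1 : ℝ) / 2) ^ (G.edist u v).toNat ≤ (1 / 2) ^ (L + 1) :=
          pow_le_pow_of_le_one (by norm_num) (by norm_num) htn
        have : (2 : ℝ) * (1 / 2) ^ (L + 1) = ((2 : ℝ) ^ L)⁻¹ := by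
          rw [pow_succ]
          field_simp
          rw [← mul_pow]; norm_num
        rw [← this]
        linarith
    calc ∑ v ∈ s.filter (fun v => ¬ G.edist u v ≤ (L : ℕ∞)), tG G u v
        ≤ ∑ _v ∈ s.filter (fun v => ¬ G.edist u v ≤ (L : ℕ∞)), ((2 : ℝ) ^ L)⁻¹ :=
          Finset.sum_le_sum hterm
      _ = (s.filter (fun v => ¬ G.edist u v ≤ (L : ℕ∞))).card * ((2 : ℝ) ^ L)⁻¹ := by
          rw [Finset.sum_const, nsmul_eq_mul]
      _ ≤ (2 ^ L : ℝ) * ((2 : ℝ) ^ L)⁻¹ := by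
          apply mul_le_mul_of_nonneg_right _ (by positivity)
          have h1 : (s.filter (fun v => ¬ G.edist u v ≤ (L : ℕ∞))).card ≤ Fintype.card V :=
            le_trans (Finset.card_le_card (Finset.filter_subset _ _)) (Finset.card_le_univ s)
          have h2 : (Fintype.card V : ℝ) ≤ (2 : ℝ) ^ L := by exact_mod_cast hL
          calc ((s.filter (fun v => ¬ G.edist u v ≤ (L : ℕ∞))).card : ℝ)
              ≤ (Fintype.card V : ℝ) := by exact_mod_cast h1
            _ ≤ _ := h2
      _ = 1 := by
          rw [mul_inv_cancel₀ (by positivity)]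
  have hnear : ∑ v ∈ s.filter (fun v => G.edist u v ≤ (L : ℕ∞)), tG G u v ≤ 3 * L := by
    have hsubs : s.filter (fun v => G.edist u v ≤ (L : ℕ∞))
        ⊆ (Finset.Icc 1 L).biUnion (fun k => sph G u k) := by
      intro v hv
      rw [Finset.mem_filter] at hv
      obtain ⟨hvs, hvle⟩ := hv
      have hvne : v ≠ u := fun h => hu (h ▸ hvs)
      have hntop : G.edist u v ≠ ⊤ := fun h => by
        rw [h] at hvle
        exact (ENat.coe_ne_top L) (top_le_iff.mp hvle)
      set k := (G.edist u v).toNat with hk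
      have hed : G.edist u v = (k : ℕ∞) := (ENat.coe_toNat hntop).symm
      have hk1 : 1 ≤ k := by
        by_contra hcon
        have hk0 : k = 0 := by omega
        rw [hk0] at hed
        have h0 : G.edist u v = 0 := by rw [hed]; simp
        exact hvne (SimpleGraph.edist_eq_zero_iff.mp h0).symm
      have hkL : k ≤ L := by
        rw [hed] at hvle
        exact_mod_cast hvle
      rw [Finset.mem_biUnion]
      exact ⟨k, Finset.mem_Icc.mpr ⟨hk1, hkL⟩, mem_sph.mpr hed⟩
    have hdisj : (↑(Finset.Icc 1 L) : Set ℕ).PairwiseDisjoint (fun k => sph G u k) := by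
      intro a _ b _ hab
      simp only [Function.onFun, Finset.disjoint_left]
      intro x hxa hxb
      rw [mem_sph] at hxa hxb
      have hab' : (a : ℕ∞) = (b : ℕ∞) := hxa.symm.trans hxb
      exact hab (by exact_mod_cast hab')
    calc ∑ v ∈ s.filter (fun v => G.edist u v ≤ (L : ℕ∞)), tG G u v
        ≤ ∑ v ∈ (Finset.Icc 1 L).biUnion (fun k => sph G u k), tG G u v :=
          Finset.sum_le_sum_of_subset_of_nonneg hsubs (fun v _ _ => tG_nonneg G u v)
      _ = ∑ k ∈ Finset.Icc 1 L, ∑ v ∈ sph G u k, tG G u v := Finset.sum_biUnion hdisj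
      _ ≤ ∑ k ∈ Finset.Icc 1 L, (3 : ℝ) := by
          apply Finset.sum_le_sum
          intro k hk
          obtain ⟨hk1, _⟩ := Finset.mem_Icc.mp hk
          have hconst : ∀ v ∈ sph G u k, tG G u v = 2 * (1 / 2 : ℝ) ^ k := by
            intro v hv
            rw [mem_sph] at hv
            unfold tG
            rw [if_neg (by rw [hv]; exact ENat.coe_ne_top k), hv, ENat.toNat_coe]
          rw [Finset.sum_congr rfl hconst, Finset.sum_const, nsmul_eq_mul]
          obtain ⟨k', rfl⟩ : ∃ k', k = k' + 1 := ⟨k - 1, by omega⟩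
          have hcard : ((sph G u (k' + 1)).card : ℝ) ≤ 3 * 2 ^ k' := by
            exact_mod_cast sph_card G hsub u k'
          have hpos : (0 : ℝ) < 2 * (1 / 2 : ℝ) ^ (k' + 1) := by positivity
          calc ((sph G u (k' + 1)).card : ℝ) * (2 * (1 / 2) ^ (k' + 1))
              ≤ (3 * 2 ^ k') * (2 * (1 / 2) ^ (k' + 1)) :=
                mul_le_mul_of_nonneg_right hcard (le_of_lt hpos)
            _ = 3 * (2 ^ k' * (1 / 2) ^ k') := by ring
            _ = 3 := by
                rw [← mul_pow]
                norm_num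
      _ = 3 * L := by
          have hIcc : (Finset.Icc 1 L).card = L := by
            rw [Nat.card_Icc]; omega
          rw [Finset.sum_const, nsmul_eq_mul, hIcc]
          ring
  linarith

noncomputable def hatw (G : SimpleGraph V) (S : Finset V) (u : V) : ℝ :=
  ∑ v ∈ S, tG G u v

noncomputable def Psi (G : SimpleGraph V) (S : Finset V) : ℝ :=
  ∑ u ∈ S, hatw G (S.erase u) u

lemma hatw_nonneg (G : SimpleGraph V) (S : Finset V) (u : V) : 0 ≤ hatw G S u :=
  Finset.sum_nonneg fun v _ => tG_nonneg G u v

lemma Psi_insert (G : SimpleGraph V) {S : Finset V} {z : V} (hz : z ∉ S) :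
    Psi G (insert z S) = Psi G S + 2 * hatw G S z := by
  classical
  unfold Psi
  rw [Finset.sum_insert hz, Finset.erase_insert hz]
  have hterm : ∀ u ∈ S, hatw G ((insert z S).erase u) u
      = tG G u z + hatw G (S.erase u) u := by
    intro u hu
    have huz : u ≠ z := fun h => hz (h ▸ hu)
    have he : (insert z S).erase u = insert z (S.erase u) :=
      Finset.erase_insert_of_ne huz.symm
    rw [he]
    unfold hatw
    rw [Finset.sum_insert (fun hcon => hz (Finset.mem_of_mem_erase hcon))]
  rw [Finset.sum_congr rfl hterm, Finset.sum_add_distrib]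
  have hcomm : ∑ u ∈ S, tG G u z = hatw G S z := by
    unfold hatw
    exact Finset.sum_congr rfl fun u _ => tG_comm G u z
  rw [hcomm]
  ring

end ExpIndepAux

/-- If `G` is a finite simple subcubic graph of order `n ≥ 2`, then
`α_e(G) ≥ n / (3·2^6·(log₂ n)^2)`. -/
theorem stmt0 {V : Type*} [Fintype V] (G : SimpleGraph V)
    (hn : 2 ≤ Fintype.card V)
    (hsub : ∀ v : V, (G.neighborSet v).ncard ≤ 3) :
    (Fintype.card V : ℝ) / (3 * 2 ^ 6 * Real.logb 2 (Fintype.card V) ^ 2)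
      ≤ (expIndepNum V G : ℝ) := by
  classical
  open ExpIndepAux Finset in
  set n := Fintype.card V with hndef
  set L : ℕ := Nat.log 2 n + 1 with hLdef
  have hnL : n ≤ 2 ^ L := le_of_lt (Nat.lt_pow_succ_log_self one_lt_two n)
  have hPhi : ∀ (u : V) (s : Finset V), u ∉ s →
      ∑ v ∈ s, tG G u v ≤ 3 * L + 1 := fun u s hu => sum_tG_le G hsub L hnL u s hu
  -- the extremal set
  obtain ⟨S, _, hSmax⟩ := Finset.exists_max_image (Finset.univ.powerset)
    (fun S : Finset V => (S.card : ℝ) - Psi G S) ⟨∅, by simp⟩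
  have hSmax' : ∀ T : Finset V, (T.card : ℝ) - Psi G T ≤ (S.card : ℝ) - Psi G S :=
    fun T => hSmax T (Finset.mem_powerset.mpr (Finset.subset_univ T))
  -- exponential independence
  have hindep : ExpIndep G S := by
    intro u hu
    have h2 : Psi G S = Psi G (S.erase u) + 2 * hatw G (S.erase u) u := by
      conv_lhs => rw [← Finset.insert_erase hu]
      exact Psi_insert G (Finset.notMem_erase u S)
    have hcard : ((S.erase u).card : ℝ) = (S.card : ℝ) - 1 := by
      rw [Finset.card_erase_of_mem hu]
      have : 1 ≤ S.card := Finset.card_pos.mpr ⟨u, hu⟩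
      push_cast [Nat.cast_sub this]
      ring
    have h1 := hSmax' (S.erase u)
    rw [hcard, h2] at h1
    have hhat : hatw G (S.erase u) u ≤ 1 / 2 := by linarith
    calc expW G (S.erase u) u ≤ hatw G (S.erase u) u := expW_le_sum_tG G _ u
      _ ≤ 1 / 2 := hhat
      _ < 1 := by norm_num
  -- size bound
  have hsize : (n : ℝ) ≤ (S.card : ℝ) * (6 * L + 3) := by
    by_contra hlt
    push_neg at hlt
    have hex : ∃ z ∈ Finset.univ \ S, hatw G S z < 1 / 2 := by
      by_contra hall
      push_neg at hall
      have hsum1 : ((Finset.univ \ S).card : ℝ) * (1 / 2)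
          ≤ ∑ z ∈ Finset.univ \ S, hatw G S z := by
        calc ((Finset.univ \ S).card : ℝ) * (1 / 2)
            = ∑ _z ∈ Finset.univ \ S, (1 / 2 : ℝ) := by
              rw [Finset.sum_const, nsmul_eq_mul]
          _ ≤ _ := Finset.sum_le_sum fun z hz => hall z hz
      have hswap : ∑ z ∈ Finset.univ \ S, hatw G S z
          = ∑ v ∈ S, ∑ z ∈ Finset.univ \ S, tG G v z := by
        unfold hatw
        rw [Finset.sum_comm]
        exact Finset.sum_congr rfl fun v _ =>
          Finset.sum_congr rfl fun z _ => tG_comm G z v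
      have hsum2 : ∑ v ∈ S, ∑ z ∈ Finset.univ \ S, tG G v z
          ≤ (S.card : ℝ) * (3 * L + 1) := by
        calc ∑ v ∈ S, ∑ z ∈ Finset.univ \ S, tG G v z
            ≤ ∑ _v ∈ S, ((3 : ℝ) * L + 1) := by
              apply Finset.sum_le_sum
              intro v hv
              exact hPhi v _ (fun hcon => (Finset.mem_sdiff.mp hcon).2 hv)
          _ = (S.card : ℝ) * (3 * L + 1) := by
              rw [Finset.sum_const, nsmul_eq_mul]
      have hcard_sdiff : ((Finset.univ \ S).card : ℝ) = (n : ℝ) - S.card := by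
        rw [Finset.card_sdiff_of_subset (Finset.subset_univ S), Finset.card_univ, ← hndef]
        have : S.card ≤ n := Finset.card_le_univ S
        push_cast [Nat.cast_sub this]
        ring
      rw [hcard_sdiff] at hsum1
      rw [hswap] at hsum1
      have := le_trans hsum1 hsum2
      nlinarith
    obtain ⟨z, hzmem, hzlt⟩ := hex
    have hznS : z ∉ S := (Finset.mem_sdiff.mp hzmem).2
    have hmax := hSmax' (insert z S)
    rw [Finset.card_insert_of_notMem hznS, Psi_insert G hznS] at hmax
    push_cast at hmax
    linarith
  -- pass to expIndepNum
  have hbdd : BddAbove {m : ℕ | ∃ S' : Finset V, ExpIndep G S' ∧ S'.card = m} := by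
    refine ⟨n, fun m hm => ?_⟩
    obtain ⟨S', _, hc⟩ := hm
    exact hc ▸ Finset.card_le_univ S'
  have hmem : S.card ∈ {m : ℕ | ∃ S' : Finset V, ExpIndep G S' ∧ S'.card = m} :=
    ⟨S, hindep, rfl⟩
  have hle : (S.card : ℝ) ≤ (expIndepNum V G : ℝ) := by
    exact_mod_cast le_csSup hbdd hmem
  -- final arithmetic
  have hn1 : (1 : ℝ) ≤ Real.logb 2 n := by
    have h2 : (2 : ℝ) ≤ (n : ℝ) := by exact_mod_cast hn
    calc (1 : ℝ) = Real.logb 2 2 := (Real.logb_self_eq_one (by norm_num)).symm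
      _ ≤ Real.logb 2 n := Real.logb_le_logb_of_le (by norm_num) (by norm_num) h2
  have hlog_le : ((Nat.log 2 n : ℕ) : ℝ) ≤ Real.logb 2 n := by
    have hpow : ((2 : ℕ) ^ Nat.log 2 n : ℕ) ≤ n := Nat.pow_log_le_self 2 (by omega)
    have hpow' : ((2 : ℝ)) ^ Nat.log 2 n ≤ (n : ℝ) := by exact_mod_cast hpow
    calc ((Nat.log 2 n : ℕ) : ℝ)
        = Real.logb 2 ((2 : ℝ) ^ Nat.log 2 n) := by
          rw [Real.logb_pow, Real.logb_self_eq_one (by norm_num)]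
          ring
      _ ≤ Real.logb 2 n := Real.logb_le_logb_of_le (by norm_num) (by positivity) hpow'
  have hden : (6 * (L : ℝ) + 3) ≤ 3 * 2 ^ 6 * Real.logb 2 n ^ 2 := by
    have hLr : (L : ℝ) = ((Nat.log 2 n : ℕ) : ℝ) + 1 := by
      rw [hLdef]; push_cast; ring
    rw [hLr]
    nlinarith [hlog_le, hn1]
  have hpos : (0 : ℝ) < 3 * 2 ^ 6 * Real.logb 2 n ^ 2 := by nlinarith [hn1]
  rw [div_le_iff₀ hpos]
  have hSnonneg : (0 : ℝ) ≤ (S.card : ℝ) := Nat.cast_nonneg _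
  calc (n : ℝ) ≤ (S.card : ℝ) * (6 * L + 3) := hsize
    _ ≤ (S.card : ℝ) * (3 * 2 ^ 6 * Real.logb 2 n ^ 2) := by
        apply mul_le_mul_of_nonneg_left hden hSnonneg
    _ ≤ (expIndepNum V G : ℝ) * (3 * 2 ^ 6 * Real.logb 2 n ^ 2) := by
        apply mul_le_mul_of_nonneg_right hle (le_of_lt hpos)
end

section
/- Let G be a finite simple subcubic graph of order n ≥ 2 and let d* = ⌈log(log n)⌉ + 2. If S is a set of vertices of G such that the distance in G between any two distinct vertices of S is more than 2d*, then S is exponentially independent in G. -/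
open SimpleGraph
open scoped Classical

section Aux
variable {V : Type*} {G : SimpleGraph V}

private lemma edist_getVert_le {u v : V} (p : G.Walk u v) (i : ℕ) :
    G.edist u (p.getVert i) ≤ i := by
  induction p generalizing i with
  | nil =>
    rename_i w
    have : (SimpleGraph.Walk.nil : G.Walk w w).getVert i = w :=
      SimpleGraph.Walk.getVert_of_length_le _ (by simp)
    simp [this]
  | @cons a b c h q ih =>
    cases i with
    | zero => simp [SimpleGraph.Walk.getVert_zero]
    | succ i =>
      rw [SimpleGraph.Walk.getVert_cons_succ]
      calc G.edist a (q.getVert i) ≤ G.edist a b + G.edist b (q.getVert i) :=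
            SimpleGraph.edist_triangle
        _ ≤ 1 + i := by
            gcongr
            · exact le_trans (SimpleGraph.edist_le h.toWalk) (by simp)
            · exact ih i
        _ = ((i + 1 : ℕ) : ℕ∞) := by push_cast; ring

private lemma edist_getVert_right_le {u v : V} (p : G.Walk u v) (i : ℕ) :
    G.edist (p.getVert i) v ≤ (p.length - i : ℕ) := by
  induction p generalizing i with
  | nil =>
    rename_i w
    have : (SimpleGraph.Walk.nil : G.Walk w w).getVert i = w :=
      SimpleGraph.Walk.getVert_of_length_le _ (by simp)
    simp [this]
  | @cons a b c h q ih =>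
    cases i with
    | zero =>
      rw [SimpleGraph.Walk.getVert_zero]
      refine le_trans (SimpleGraph.edist_le (q.cons h)) ?_
      simp
    | succ i =>
      rw [SimpleGraph.Walk.getVert_cons_succ]
      refine le_trans (ih i) ?_
      have : (q.cons h).length - (i+1) = q.length - i := by
        simp [SimpleGraph.Walk.length_cons]
      rw [this]

private lemma exists_adj_edist_eq {u x : V} {k : ℕ}
    (h : G.edist u x = ((k + 1 : ℕ) : ℕ∞)) : ∃ w, G.Adj w x ∧ G.edist u w = k := by
  obtain ⟨p, hp⟩ := SimpleGraph.exists_walk_of_edist_eq_coe h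
  have hlen : p.length = k + 1 := hp
  refine ⟨p.getVert k, ?_, ?_⟩
  · have hadj := p.adj_getVert_succ (i := k) (by omega)
    have hvx : p.getVert (k+1) = x := by rw [← hlen]; exact p.getVert_length
    rwa [hvx] at hadj
  · have h1 : G.edist u (p.getVert k) ≤ k := edist_getVert_le p k
    obtain ⟨m, hm, hmk⟩ := ENat.le_coe_iff.mp h1
    have h2 : G.edist (p.getVert k) x ≤ 1 := by
      have := edist_getVert_right_le p k
      rwa [hlen, Nat.add_sub_cancel_left, Nat.cast_one] at this
    have h3 : ((k+1 : ℕ) : ℕ∞) ≤ G.edist u (p.getVert k) + G.edist (p.getVert k) x := by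
      rw [← h]; exact SimpleGraph.edist_triangle
    rw [hm]
    have : ((k+1 : ℕ) : ℕ∞) ≤ (m : ℕ∞) + 1 := le_trans h3 (by rw [hm]; gcongr)
    have : k + 1 ≤ m + 1 := by exact_mod_cast this
    have : m = k := by omega
    rw [this]

end Aux

section Balls
variable {V : Type*} [Fintype V] {G : SimpleGraph V}

private noncomputable def sph (G : SimpleGraph V) (u : V) (k : ℕ) : Finset V :=
  Finset.univ.filter fun x => G.edist u x = (k : ℕ∞)

private noncomputable def bal (G : SimpleGraph V) (u : V) (k : ℕ) : Finset V :=
  Finset.univ.filter fun x => G.edist u x ≤ (k : ℕ∞)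

private lemma mem_bal {u x : V} {k : ℕ} : x ∈ bal G u k ↔ G.edist u x ≤ (k : ℕ∞) := by
  simp [bal]

private lemma degree_le (hsub : ∀ v : V, (G.neighborSet v).ncard ≤ 3) (v : V) :
    (G.neighborFinset v).card ≤ 3 := by
  have := hsub v
  rwa [Set.ncard_eq_toFinset_card'] at this

private lemma sph_step (hsub : ∀ v : V, (G.neighborSet v).ncard ≤ 3) (u : V) (k : ℕ) :
    (sph G u (k + 2)).card ≤ 2 * (sph G u (k + 1)).card := by
  classical
  have hsubs : sph G u (k + 2) ⊆ (sph G u (k + 1)).biUnion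
      (fun w => (G.neighborFinset w).filter fun x => G.edist u x = ((k + 2 : ℕ) : ℕ∞)) := by
    intro x hx
    simp only [sph, Finset.mem_filter, Finset.mem_univ, true_and] at hx
    obtain ⟨w, hadj, hw⟩ := exists_adj_edist_eq (k := k + 1) (by exact_mod_cast hx)
    refine Finset.mem_biUnion.mpr ⟨w, ?_, ?_⟩
    · simp [sph, hw]
    · simp only [Finset.mem_filter, SimpleGraph.mem_neighborFinset]
      exact ⟨hadj, by exact_mod_cast hx⟩
  refine le_trans (Finset.card_le_card hsubs) ?_
  refine le_trans (Finset.card_biUnion_le) ?_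
  refine le_trans (Finset.sum_le_card_nsmul _ _ 2 ?_) (by rw [smul_eq_mul]; ring_nf; rfl)
  intro w hw
  simp only [sph, Finset.mem_filter, Finset.mem_univ, true_and] at hw
  obtain ⟨w', hadj', hw'⟩ := exists_adj_edist_eq (k := k) (by exact_mod_cast hw)
  have hsub2 : (G.neighborFinset w).filter (fun x => G.edist u x = ((k + 2 : ℕ) : ℕ∞)) ⊆
      (G.neighborFinset w).erase w' := by
    intro x hx
    simp only [Finset.mem_filter] at hx
    refine Finset.mem_erase.mpr ⟨?_, hx.1⟩
    rintro rfl
    rw [hw'] at hx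
    have : k = k + 2 := by exact_mod_cast hx.2
    omega
  refine le_trans (Finset.card_le_card hsub2) ?_
  rw [Finset.card_erase_of_mem (by simpa using hadj'.symm)]
  have := degree_le hsub w
  omega

private lemma sph_card (hsub : ∀ v : V, (G.neighborSet v).ncard ≤ 3) (u : V) (k : ℕ) :
    (sph G u (k + 1)).card ≤ 3 * 2 ^ k := by
  induction k with
  | zero =>
    have h1 : sph G u 1 ⊆ G.neighborFinset u := by
      intro x hx
      simp only [sph, Finset.mem_filter, Finset.mem_univ, true_and] at hx
      have : G.edist u x = 1 := by exact_mod_cast hx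
      simpa using (SimpleGraph.edist_eq_one_iff_adj.mp this)
    simpa using le_trans (Finset.card_le_card h1) (degree_le hsub u)
  | succ k ih =>
    calc (sph G u (k + 2)).card ≤ 2 * (sph G u (k + 1)).card := sph_step hsub u k
      _ ≤ 2 * (3 * 2 ^ k) := by omega
      _ = 3 * 2 ^ (k + 1) := by ring

private lemma bal_card (hsub : ∀ v : V, (G.neighborSet v).ncard ≤ 3) (u : V) (k : ℕ) :
    (bal G u k).card + 2 ≤ 3 * 2 ^ k := by
  induction k with
  | zero =>
    have h1 : bal G u 0 ⊆ {u} := by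
      intro x hx
      simp only [bal, Finset.mem_filter, Finset.mem_univ, true_and, Nat.cast_zero,
        nonpos_iff_eq_zero] at hx
      have := SimpleGraph.edist_eq_zero_iff.mp hx
      simp [this.symm]
    have := Finset.card_le_card h1
    simp only [Finset.card_singleton] at this
    omega
  | succ k ih =>
    have h1 : bal G u (k + 1) ⊆ bal G u k ∪ sph G u (k + 1) := by
      intro x hx
      simp only [bal, Finset.mem_filter, Finset.mem_univ, true_and] at hx
      obtain ⟨m, hm, hmk⟩ := ENat.le_coe_iff.mp hx
      simp only [Finset.mem_union, bal, sph, Finset.mem_filter, Finset.mem_univ, true_and, hm]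
      rcases Nat.lt_or_ge m (k + 1) with h | h
      · exact Or.inl (by exact_mod_cast Nat.cast_le.mpr (by omega : m ≤ k))
      · have : m = k + 1 := by omega
        exact Or.inr (by rw [this])
    have h2 := le_trans (Finset.card_le_card h1) (Finset.card_union_le _ _)
    have h3 := sph_card hsub u k
    have : (3:ℕ) * 2 ^ (k+1) = 3 * 2^k + 3 * 2^k := by ring
    omega

end Balls

private lemma card_le_pow_pow {n : ℕ} (hn : 2 ≤ n) :
    n ≤ 2 ^ 2 ^ (⌈Real.logb 2 (Real.logb 2 n)⌉).toNat := by
  set e := (⌈Real.logb 2 (Real.logb 2 n)⌉).toNat with he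
  have hn0 : (0:ℝ) < n := by positivity
  have hL1 : (1:ℝ) ≤ Real.logb 2 n := by
    have := Real.logb_le_logb_of_le (b := 2) (by norm_num) (by norm_num : (0:ℝ) < 2)
      (by exact_mod_cast hn : (2:ℝ) ≤ n)
    rwa [Real.logb_self_eq_one (by norm_num : (1:ℝ) < 2)] at this
  have hL0 : (0:ℝ) < Real.logb 2 n := lt_of_lt_of_le one_pos hL1
  have he1 : Real.logb 2 (Real.logb 2 n) ≤ (e : ℝ) := by
    calc Real.logb 2 (Real.logb 2 n) ≤ (⌈Real.logb 2 (Real.logb 2 n)⌉ : ℝ) := Int.le_ceil _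
      _ ≤ ((⌈Real.logb 2 (Real.logb 2 n)⌉.toNat : ℤ) : ℝ) := by
          exact_mod_cast Int.self_le_toNat _
      _ = (e : ℝ) := by rw [he]; push_cast; ring
  have h2 : Real.logb 2 n ≤ (2:ℝ) ^ (e:ℕ) := by
    calc Real.logb 2 n = (2:ℝ) ^ (Real.logb 2 (Real.logb 2 n)) :=
          (Real.rpow_logb (by norm_num) (by norm_num) hL0).symm
      _ ≤ (2:ℝ) ^ ((e:ℕ):ℝ) := by
          apply Real.rpow_le_rpow_of_exponent_le (by norm_num) he1
      _ = (2:ℝ) ^ (e:ℕ) := Real.rpow_natCast 2 e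
  have h3 : (n:ℝ) ≤ ((2:ℕ) ^ (2:ℕ) ^ e : ℕ) := by
    calc (n:ℝ) = (2:ℝ) ^ (Real.logb 2 n) := (Real.rpow_logb (by norm_num) (by norm_num) hn0).symm
      _ ≤ (2:ℝ) ^ (((2:ℕ)^e : ℕ) : ℝ) := by
          apply Real.rpow_le_rpow_of_exponent_le (by norm_num)
          calc Real.logb 2 n ≤ (2:ℝ)^(e:ℕ) := h2
            _ = (((2:ℕ)^e : ℕ) : ℝ) := by push_cast; ring
      _ = _ := by rw [Real.rpow_natCast]; push_cast; ring
  exact_mod_cast h3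

/-- If `G` is a finite simple subcubic graph of order `n ≥ 2`,
`d* = ⌈log₂(log₂ n)⌉ + 2`, and `S` is a set of vertices of `G` any two distinct
members of which are at distance more than `2d*` in `G`, then `S` is exponentially
independent in `G`. -/
theorem stmt1 {V : Type*} [Fintype V] (G : SimpleGraph V)
    (hn : 2 ≤ Fintype.card V)
    (hsub : ∀ v : V, (G.neighborSet v).ncard ≤ 3)
    (dstar : ℕ)
    (hdstar : dstar = (⌈Real.logb 2 (Real.logb 2 (Fintype.card V))⌉).toNat + 2)
    (S : Finset V)
    (hsep : ∀ u ∈ S, ∀ v ∈ S, u ≠ v → (2 * dstar : ℕ∞) < G.edist u v) :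
    ExpIndep G S := by
  intro u hu
  have hd2 : 2 ≤ dstar := by omega
  set n := Fintype.card V with hn'
  set e := (⌈Real.logb 2 (Real.logb 2 (n:ℕ))⌉).toNat with he
  set ℓ := Nat.clog 2 n with hℓdef
  have hℓ : ℓ ≤ 2 ^ e := (Nat.clog_le_iff_le_pow one_lt_two).mpr (card_le_pow_pow hn)
  have hnℓ : n ≤ 2 ^ ℓ := Nat.le_pow_clog one_lt_two n
  set T := S.erase u with hT
  set F := T.filter (fun v => G.edist u v ≠ ⊤) with hFdef
  set D : V → ℕ := fun v => (G.edist u v).toNat with hD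
  set a := 2 * dstar + 1 with ha
  set K := ℓ + dstar with hK
  set M := ℓ + 3 * dstar + 2 with hM
  have haM : a ≤ M + 1 := by omega
  -- F members: in S, ≠ u, finite distance, D ≥ a
  have hFS : ∀ v ∈ F, v ∈ S ∧ v ≠ u ∧ G.edist u v ≠ ⊤ ∧ a ≤ D v := by
    intro v hv
    rw [hFdef, Finset.mem_filter] at hv
    obtain ⟨hvT, hne⟩ := hv
    have hvS : v ∈ S := Finset.mem_of_mem_erase hvT
    have hvu : v ≠ u := Finset.ne_of_mem_erase hvT
    refine ⟨hvS, hvu, hne, ?_⟩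
    have hlt := hsep u hu v hvS (Ne.symm hvu)
    have hcast : G.edist u v = ((D v : ℕ) : ℕ∞) := (ENat.coe_toNat hne).symm
    rw [hcast] at hlt
    have : ((2 * dstar : ℕ) : ℕ∞) < ((D v : ℕ) : ℕ∞) := by
      refine lt_of_le_of_lt (le_of_eq ?_) hlt
      push_cast; ring
    have := Nat.cast_lt.mp this
    omega
  -- Step 1 : expW bounded by clean sum over F
  have step1 : expW G T u ≤ ∑ v ∈ F, 2 * (1/2 : ℝ) ^ (D v) := by
    have hle : ∀ v ∈ T,
        (if distDel G (↑T) u v = ⊤ then (0:ℝ) else 2 * (1/2 : ℝ) ^ (distDel G (↑T) u v).toNat)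
        ≤ (if G.edist u v = ⊤ then (0:ℝ) else 2 * (1/2 : ℝ) ^ (D v)) := by
      intro v hv
      have hmono : G.edist u v ≤ distDel G (↑T) u v := by
        refine SimpleGraph.edist_anti ?_
        intro x y hxy
        exact (show G.Adj x y ∧ _ from hxy).1
      by_cases htop : G.edist u v = ⊤
      · have : distDel G (↑T) u v = ⊤ := top_le_iff.mp (htop ▸ hmono)
        simp [this, htop]
      · by_cases hdtop : distDel G (↑T) u v = ⊤
        · simp only [hdtop, if_pos rfl, if_neg htop]
          positivity
        · simp only [if_neg hdtop, if_neg htop]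
          have hmn : D v ≤ (distDel G (↑T) u v).toNat := ENat.toNat_le_toNat hmono hdtop
          have := pow_le_pow_of_le_one (by norm_num : (0:ℝ) ≤ 1/2) (by norm_num) hmn
          linarith
    calc expW G T u ≤ ∑ v ∈ T, (if G.edist u v = ⊤ then (0:ℝ) else 2 * (1/2 : ℝ) ^ (D v)) :=
          Finset.sum_le_sum hle
      _ = ∑ v ∈ F, 2 * (1/2 : ℝ) ^ (D v) := by
          rw [hFdef, Finset.sum_filter]
          exact Finset.sum_congr rfl (fun v _ => by split_ifs with h1 h2 <;> simp_all)
  -- counting function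
  set c : ℕ → ℕ := fun k => (F.filter (fun v => D v ≤ k)).card with hc
  have hcn : ∀ k, c k ≤ 2 ^ ℓ := fun k => le_trans (Finset.card_le_univ _) hnℓ
  have hcount : ∀ k, a ≤ k → c k ≤ 3 * 2 ^ (k - dstar) := by
    intro k hk
    have hmid : ∀ v : V, ∃ m : V, v ∈ F.filter (fun v => D v ≤ k) →
        G.edist u m ≤ ((k - dstar : ℕ) : ℕ∞) ∧ G.edist m v ≤ ((dstar : ℕ) : ℕ∞) := by
      intro v
      by_cases hv : v ∈ F.filter (fun v => D v ≤ k)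
      · rw [Finset.mem_filter] at hv
        obtain ⟨hvF, hvk⟩ := hv
        obtain ⟨hvS, hvu, hne, hDa⟩ := hFS v hvF
        obtain ⟨p, hp⟩ := SimpleGraph.exists_walk_of_edist_ne_top hne
        have hplen : p.length = D v := by
          have : ((p.length : ℕ) : ℕ∞) = G.edist u v := hp
          rw [hD]
          exact_mod_cast this.trans (ENat.coe_toNat hne).symm
        have hvk' : D v ≤ k := hvk
        refine ⟨p.getVert (D v - dstar), fun _ => ⟨?_, ?_⟩⟩
        · refine le_trans (edist_getVert_le p (D v - dstar)) ?_
          have h9 : D v - dstar ≤ k - dstar := by omega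
          exact_mod_cast Nat.cast_le.mpr h9
        · have h2 := edist_getVert_right_le p (D v - dstar)
          rw [hplen] at h2
          refine le_trans h2 ?_
          have h9 : D v - (D v - dstar) ≤ dstar := by omega
          exact_mod_cast Nat.cast_le.mpr h9
      · exact ⟨v, fun h => absurd h hv⟩
    choose f hf using hmid
    have hinj : Set.InjOn f (F.filter (fun v => D v ≤ k)) := by
      intro v hv v' hv' heq
      by_contra hne
      have hvS := (hFS v (Finset.mem_filter.mp hv).1).1
      have hv'S := (hFS v' (Finset.mem_filter.mp hv').1).1
      have h1 := (hf v hv).2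
      have h2 := (hf v' hv').2
      have htri : G.edist v v' ≤ ((2 * dstar : ℕ) : ℕ∞) := by
        calc G.edist v v' ≤ G.edist v (f v) + G.edist (f v) v' := SimpleGraph.edist_triangle
          _ ≤ ((dstar : ℕ) : ℕ∞) + ((dstar : ℕ) : ℕ∞) := by
              refine add_le_add ?_ ?_
              · rw [SimpleGraph.edist_comm]; exact h1
              · rw [heq]; exact h2
          _ = ((2 * dstar : ℕ) : ℕ∞) := by push_cast; ring
      have hlt := hsep v hvS v' hv'S hne
      have : ((2 * dstar : ℕ) : ℕ∞) < ((2 * dstar : ℕ) : ℕ∞) := by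
        refine lt_of_lt_of_le (lt_of_le_of_lt (le_of_eq ?_) hlt) htri
        push_cast; ring
      exact lt_irrefl _ this
    have hmaps : ∀ v ∈ F.filter (fun v => D v ≤ k), f v ∈ bal G u (k - dstar) := by
      intro v hv
      exact mem_bal.mpr (hf v hv).1
    have hcc := Finset.card_le_card_of_injOn f hmaps hinj
    have hb := bal_card hsub u (k - dstar)
    show (Finset.filter (fun v => D v ≤ k) F).card ≤ 3 * 2 ^ (k - dstar)
    omega
  -- Step 2: per-vertex geometric expansion
  have step2 : ∀ v ∈ F, 2 * (1/2 : ℝ) ^ (D v) ≤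
      (∑ k ∈ Finset.Ico a (M+1), if D v ≤ k then (1/2 : ℝ)^k else 0) + (1/2 : ℝ)^M := by
    intro v hv
    obtain ⟨_, _, _, hDa⟩ := hFS v hv
    have hfilter : (Finset.Ico a (M+1)).filter (fun k => D v ≤ k) = Finset.Ico (D v) (M+1) := by
      ext k
      simp only [Finset.mem_filter, Finset.mem_Ico]
      omega
    rw [← Finset.sum_filter, hfilter]
    by_cases hbM : D v ≤ M
    · rw [geom_sum_Ico (by norm_num : (1/2:ℝ) ≠ 1) (by omega : D v ≤ M + 1)]
      have key : ((1/2:ℝ)^(M+1) - (1/2:ℝ)^(D v)) / ((1/2:ℝ) - 1)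
          = 2 * (1/2:ℝ)^(D v) - 2*(1/2:ℝ)^(M+1) := by
        rw [div_eq_iff (by norm_num : ((1/2:ℝ)-1) ≠ 0)]; ring
      rw [key, pow_succ]
      linarith
    · have hempty : Finset.Ico (D v) (M+1) = ∅ := Finset.Ico_eq_empty (by omega)
      rw [hempty, Finset.sum_empty, zero_add]
      calc 2 * (1/2:ℝ) ^ (D v) ≤ 2 * (1/2:ℝ)^(M+1) := by
            have := pow_le_pow_of_le_one (by norm_num : (0:ℝ) ≤ 1/2) (by norm_num)
              (by omega : M + 1 ≤ D v)
            linarith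
        _ = (1/2:ℝ)^M := by rw [pow_succ]; ring
  -- Step 3: swap the double sum
  have swap : ∑ v ∈ F, (∑ k ∈ Finset.Ico a (M+1), if D v ≤ k then (1/2:ℝ)^k else 0)
      = ∑ k ∈ Finset.Ico a (M+1), (c k : ℝ) * (1/2:ℝ)^k := by
    rw [Finset.sum_comm]
    refine Finset.sum_congr rfl (fun k hk => ?_)
    rw [← Finset.sum_filter, Finset.sum_const, nsmul_eq_mul]
  have step3 : ∑ v ∈ F, 2 * (1/2:ℝ)^(D v)
      ≤ (∑ k ∈ Finset.Ico a (M+1), (c k : ℝ) * (1/2:ℝ)^k) + (F.card : ℝ) * (1/2:ℝ)^M := by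
    calc ∑ v ∈ F, 2 * (1/2:ℝ)^(D v)
        ≤ ∑ v ∈ F, ((∑ k ∈ Finset.Ico a (M+1), if D v ≤ k then (1/2:ℝ)^k else 0) + (1/2:ℝ)^M) :=
          Finset.sum_le_sum step2
      _ = (∑ v ∈ F, ∑ k ∈ Finset.Ico a (M+1), if D v ≤ k then (1/2:ℝ)^k else 0)
            + (F.card : ℝ) * (1/2:ℝ)^M := by
          rw [Finset.sum_add_distrib, Finset.sum_const, nsmul_eq_mul]
      _ = _ := by rw [swap]
  -- split point
  set P := max a K with hP
  have hPa : a ≤ P := le_max_left _ _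
  have hPK : K ≤ P := le_max_right _ _
  have hPM : P ≤ M + 1 := by
    rcases max_cases a K with ⟨h1, h2⟩ | ⟨h1, h2⟩ <;> omega
  set t := ℓ - (dstar + 1) with ht
  have hPat : P - a ≤ t := by
    rcases max_cases a K with ⟨h1, h2⟩ | ⟨h1, h2⟩ <;> omega
  have hpow_ne : ∀ r s : ℕ, (2:ℝ)^r * (1/2:ℝ)^(r+s) = (1/2:ℝ)^s := by
    intro r s
    calc (2:ℝ)^r * (1/2:ℝ)^(r+s) = ((2:ℝ)*(1/2))^r * (1/2:ℝ)^s := by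
          rw [pow_add, mul_pow]; ring
      _ = (1/2:ℝ)^s := by norm_num
  have hhead : ∑ k ∈ Finset.Ico a P, (c k : ℝ) * (1/2:ℝ)^k ≤ (t:ℝ) * (3 * (1/2:ℝ)^dstar) := by
    refine le_trans (Finset.sum_le_card_nsmul _ _ (3 * (1/2:ℝ)^dstar) ?_) ?_
    · intro k hk
      have hak := Finset.mem_Ico.mp hk
      have h1 : (c k : ℝ) ≤ ((3 * 2^(k-dstar) : ℕ) : ℝ) := Nat.cast_le.mpr (hcount k hak.1)
      have hk' : (k - dstar) + dstar = k := by omega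
      have h2 : ((2:ℝ))^(k-dstar) * (1/2:ℝ)^k = (1/2:ℝ)^dstar := by
        have := hpow_ne (k - dstar) dstar
        rwa [hk'] at this
      calc (c k : ℝ) * (1/2:ℝ)^k ≤ ((3 * 2^(k-dstar) : ℕ) : ℝ) * (1/2:ℝ)^k := by
            apply mul_le_mul_of_nonneg_right h1 (by positivity)
        _ = 3 * ((2:ℝ)^(k-dstar) * (1/2:ℝ)^k) := by push_cast; ring
        _ = 3 * (1/2:ℝ)^dstar := by rw [h2]
    · rw [Nat.card_Ico, nsmul_eq_mul]
      apply mul_le_mul_of_nonneg_right _ (by positivity)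
      exact_mod_cast Nat.cast_le.mpr hPat
  have htail : ∑ k ∈ Finset.Ico P (M+1), (c k : ℝ) * (1/2:ℝ)^k ≤ 2 * (1/2:ℝ)^dstar := by
    have hgeo : ∑ k ∈ Finset.Ico P (M+1), (1/2:ℝ)^k ≤ 2 * (1/2:ℝ)^P := by
      rw [geom_sum_Ico (by norm_num : (1/2:ℝ) ≠ 1) hPM]
      have key : ((1/2:ℝ)^(M+1) - (1/2:ℝ)^P) / ((1/2:ℝ) - 1)
          = 2 * (1/2:ℝ)^P - 2*(1/2:ℝ)^(M+1) := by
        rw [div_eq_iff (by norm_num : ((1/2:ℝ)-1) ≠ 0)]; ring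
      rw [key]
      have : (0:ℝ) ≤ (1/2:ℝ)^(M+1) := by positivity
      linarith
    calc ∑ k ∈ Finset.Ico P (M+1), (c k : ℝ) * (1/2:ℝ)^k
        ≤ ∑ k ∈ Finset.Ico P (M+1), ((2:ℝ)^ℓ) * (1/2:ℝ)^k := by
          refine Finset.sum_le_sum (fun k hk => ?_)
          apply mul_le_mul_of_nonneg_right _ (by positivity)
          exact_mod_cast Nat.cast_le.mpr (hcn k)
      _ = ((2:ℝ)^ℓ) * ∑ k ∈ Finset.Ico P (M+1), (1/2:ℝ)^k := by rw [Finset.mul_sum]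
      _ ≤ ((2:ℝ)^ℓ) * (2 * (1/2:ℝ)^P) := by
          apply mul_le_mul_of_nonneg_left hgeo (by positivity)
      _ ≤ ((2:ℝ)^ℓ) * (2 * (1/2:ℝ)^K) := by
          have hPKle := pow_le_pow_of_le_one (by norm_num : (0:ℝ) ≤ 1/2) (by norm_num) hPK
          apply mul_le_mul_of_nonneg_left (by linarith) (by positivity)
      _ = 2 * (1/2:ℝ)^dstar := by
          rw [hK]
          calc ((2:ℝ)^ℓ) * (2 * (1/2:ℝ)^(ℓ + dstar)) = 2 * ((2:ℝ)^ℓ * (1/2:ℝ)^(ℓ + dstar)) := by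
                ring
            _ = 2 * (1/2:ℝ)^dstar := by rw [hpow_ne ℓ dstar]
  have hlast : (F.card : ℝ) * (1/2:ℝ)^M ≤ (1/4) * (1/2:ℝ)^dstar := by
    have h1 : (F.card : ℝ) ≤ (2:ℝ)^ℓ := by
      have := le_trans (Finset.card_le_univ F) hnℓ
      exact_mod_cast Nat.cast_le.mpr this
    have h2 : (2:ℝ)^ℓ * (1/2:ℝ)^M = (1/2:ℝ)^(3*dstar+2) := by
      rw [hM, show ℓ + 3*dstar + 2 = ℓ + (3*dstar+2) by ring]
      exact hpow_ne _ _
    have h5 : (0:ℝ) ≤ (1/2:ℝ)^dstar := by positivity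
    have h3 : (1/2:ℝ)^(3*dstar+2) ≤ (1/4) * (1/2:ℝ)^dstar := by
      have h4 : (1/2:ℝ)^(2*dstar+2) ≤ 1/4 := by
        have := pow_le_pow_of_le_one (by norm_num : (0:ℝ) ≤ 1/2) (by norm_num)
          (by omega : 2 ≤ 2*dstar+2)
        norm_num at this
        linarith
      calc (1/2:ℝ)^(3*dstar+2) = (1/2:ℝ)^dstar * (1/2:ℝ)^(2*dstar+2) := by
            rw [← pow_add]; congr 1; ring
        _ ≤ (1/2:ℝ)^dstar * (1/4) := mul_le_mul_of_nonneg_left h4 h5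
        _ = (1/4) * (1/2:ℝ)^dstar := by ring
    have h0 : (0:ℝ) ≤ (1/2:ℝ)^M := by positivity
    calc (F.card : ℝ) * (1/2:ℝ)^M ≤ (2:ℝ)^ℓ * (1/2:ℝ)^M :=
          mul_le_mul_of_nonneg_right h1 h0
      _ = (1/2:ℝ)^(3*dstar+2) := h2
      _ ≤ (1/4) * (1/2:ℝ)^dstar := h3
  -- final numeric bound
  have hnat : 3 * t + 3 ≤ 2 ^ dstar := by
    have h2d : (2:ℕ)^dstar = 4 * 2^e := by
      rw [hdstar, pow_add]; ring
    have hee : e < 2^e := Nat.lt_two_pow_self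
    omega
  have total : expW G T u ≤ ((3 * t : ℕ) + (9/4 : ℝ)) * (1/2:ℝ)^dstar := by
    have hsplit : ∑ k ∈ Finset.Ico a (M+1), (c k : ℝ) * (1/2:ℝ)^k
        = (∑ k ∈ Finset.Ico a P, (c k : ℝ) * (1/2:ℝ)^k)
          + ∑ k ∈ Finset.Ico P (M+1), (c k : ℝ) * (1/2:ℝ)^k :=
      (Finset.sum_Ico_consecutive _ hPa hPM).symm
    have h0 : (0:ℝ) ≤ (1/2:ℝ)^dstar := by positivity
    calc expW G T u ≤ ∑ v ∈ F, 2 * (1/2:ℝ)^(D v) := step1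
      _ ≤ (∑ k ∈ Finset.Ico a (M+1), (c k : ℝ) * (1/2:ℝ)^k) + (F.card : ℝ) * (1/2:ℝ)^M := step3
      _ ≤ ((3 * t : ℕ) + (9/4 : ℝ)) * (1/2:ℝ)^dstar := by
          rw [hsplit]
          push_cast
          linarith [hhead, htail, hlast]
  refine lt_of_le_of_lt total ?_
  have hc2 : ((3 * t : ℕ) + (9/4:ℝ)) < ((2:ℝ))^dstar := by
    have : ((3*t+3 : ℕ) : ℝ) ≤ (((2:ℕ)^dstar : ℕ) : ℝ) := Nat.cast_le.mpr hnat
    push_cast at this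
    push_cast
    linarith
  have hpos : (0:ℝ) < (2:ℝ)^dstar := by positivity
  have hhalf : (1/2:ℝ)^dstar = 1 / (2:ℝ)^dstar := by
    rw [div_pow, one_pow]
  rw [hhalf, ← div_eq_mul_one_div]
  rw [div_lt_one hpos]
  exact hc2
end

section
/- There is no constant c > 0 such that α_e(T(6,d)) ≥ c·n(T(6,d)) + 1 for every positive integer d. Equivalently: for every c > 0 there exists a positive integer d such that every finite tree T isomorphic to T(6,d) satisfies α_e(T) < c·n(T) + 1, where n(T(6,d)) = (3·5^d − 1)/2. -/
open SimpleGraph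
open scoped Classical

/-- `G` is (isomorphic to) the tree `T(Δ,d)` with root `r`: a finite tree in which every
leaf is at distance exactly `d` from `r` and every non-leaf vertex has degree `Δ`. -/
def IsTreeTDelta {V : Type*} (G : SimpleGraph V) (r : V) (Δ d : ℕ) : Prop :=
  G.Connected ∧ G.IsAcyclic ∧
  (∀ v : V, (G.neighborSet v).ncard = 1 → G.edist r v = (d : ℕ∞)) ∧
  (∀ v : V, (G.neighborSet v).ncard ≠ 1 → (G.neighborSet v).ncard = Δ)

-- walk transfer into deleted graph
lemma walk_transfer {V : Type*} {G : SimpleGraph V} (A : Set V) :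
    ∀ {a b : V} (P : G.Walk a b), (∀ z ∈ P.support, z ∉ A) →
      ∃ P' : (G.deleteSet A).Walk a b, P'.length = P.length := by
  intro a b P
  induction P with
  | nil => intro _; exact ⟨SimpleGraph.Walk.nil, rfl⟩
  | @cons x y z h P ih =>
      intro hsupp
      have hx : x ∉ A := hsupp x (by simp)
      have hy : y ∉ A := hsupp y (by simp [SimpleGraph.Walk.support_cons])
      obtain ⟨P', hP'⟩ := ih (fun w hw => hsupp w (by simp [SimpleGraph.Walk.support_cons, hw]))
      exact ⟨SimpleGraph.Walk.cons (show (G.deleteSet A).Adj x y from And.intro h (And.intro hx hy)) P', by simp [hP']⟩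

-- a vertex on a geodesic splits the distance
lemma between_of_mem_support {V : Type*} {G : SimpleGraph V} (hconn : G.Connected)
    {a b z : V} (P : G.Walk a b) (hP : P.length = G.dist a b) (hz : z ∈ P.support) :
    G.dist a z + G.dist z b = G.dist a b := by
  have h1 : G.dist a z ≤ (P.takeUntil z hz).length := SimpleGraph.dist_le _
  have h2 : G.dist z b ≤ (P.dropUntil z hz).length := SimpleGraph.dist_le _
  have h3 : (P.takeUntil z hz).length + (P.dropUntil z hz).length = P.length := by
    rw [← SimpleGraph.Walk.length_append, SimpleGraph.Walk.take_spec]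
  have h4 := hconn.dist_triangle (u := a) (v := z) (w := b)
  omega

lemma summand_ge {V : Type*} {G : SimpleGraph V} (hconn : G.Connected) (S : Finset V)
    {p q : V} (hq : q ∈ S) (hne : q ≠ p)
    (hfree : ∀ z ∈ S, z ≠ p → z ≠ q → G.dist p z + G.dist z q ≠ G.dist p q) :
    2 * (1 / 2 : ℝ) ^ (G.dist p q) ≤
      (if distDel G (↑(S.erase p)) p q = ⊤ then (0:ℝ)
        else 2 * (1 / 2 : ℝ) ^ (distDel G (↑(S.erase p)) p q).toNat) := by
  have hset : ((↑(S.erase p) : Set V) \ {p, q}) = (↑S : Set V) \ {p, q} := by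
    ext z
    simp only [Set.mem_diff, Finset.coe_erase, Set.mem_setOf_eq, Set.mem_insert_iff,
      Set.mem_singleton_iff, Finset.mem_coe, Finset.mem_erase, Set.mem_diff]
    tauto
  obtain ⟨P, hPpath, hPlen⟩ := hconn.exists_path_of_dist p q
  have hsupp : ∀ z ∈ P.support, z ∉ ((↑S : Set V) \ {p, q}) := by
    intro z hz hmem
    rcases hmem with ⟨hzS, hznot⟩
    simp only [Set.mem_insert_iff, Set.mem_singleton_iff, not_or] at hznot
    exact hfree z (by exact_mod_cast hzS) hznot.1 hznot.2
      (between_of_mem_support hconn P hPlen hz)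
  obtain ⟨P', hP'len⟩ := walk_transfer ((↑S : Set V) \ {p, q}) P hsupp
  have hedist : distDel G (↑(S.erase p)) p q ≤ (G.dist p q : ℕ∞) := by
    unfold distDel
    rw [hset]
    calc (G.deleteSet ((↑S : Set V) \ {p, q})).edist p q ≤ (P'.length : ℕ∞) :=
          SimpleGraph.edist_le P'
      _ = (G.dist p q : ℕ∞) := by rw [hP'len, hPlen]
  have hne_top : distDel G (↑(S.erase p)) p q ≠ ⊤ := by
    intro h
    rw [h] at hedist
    exact (by simp at hedist)
  rw [if_neg hne_top]
  have htoNat : (distDel G (↑(S.erase p)) p q).toNat ≤ G.dist p q := by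
    have := ENat.toNat_le_toNat hedist (by simp)
    simpa using this
  have hpow : (1 / 2 : ℝ) ^ (G.dist p q) ≤ (1/2 : ℝ) ^ (distDel G (↑(S.erase p)) p q).toNat :=
    pow_le_pow_of_le_one (by norm_num) (by norm_num) htoNat
  linarith

lemma card_expIndep_le {V : Type*} [Fintype V] {G : SimpleGraph V} (hconn : G.Connected)
    {S : Finset V} (hS : ExpIndep G S) {D : ℕ} (hdiam : ∀ x y : V, G.dist x y ≤ D) :
    S.card ≤ 2 ^ D := by
  rcases S.eq_empty_or_nonempty with hSe | ⟨u, hu⟩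
  · simp [hSe]
  set A : V → Finset V :=
    fun p => S.filter (fun v => G.dist u p + G.dist p v = G.dist u v) with hA
  have main : ∀ e : ℕ, ∀ p ∈ S, D - G.dist u p ≤ e → (A p).card ≤ 2 ^ (D - G.dist u p) := by
    intro e
    induction e with
    | zero =>
        intro p hp hpe
        have hE : D - G.dist u p = 0 := Nat.le_zero.mp hpe
        rw [hE]
        have hsub : A p ⊆ {p} := by
          intro v hv
          rw [hA, Finset.mem_filter] at hv
          by_contra hvp
          simp only [Finset.mem_singleton] at hvp
          have h1 : 0 < G.dist p v := hconn.pos_dist_of_ne (fun h => hvp h.symm)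
          have h2 : G.dist u v ≤ D := hdiam u v
          have h3 : G.dist u p ≤ D := hdiam u p
          omega
        simpa using Finset.card_le_card hsub
    | succ e ih =>
        intro p hp hpe
        by_cases hE0 : D - G.dist u p = 0
        · rw [hE0]
          have hsub : A p ⊆ {p} := by
            intro v hv
            rw [hA, Finset.mem_filter] at hv
            by_contra hvp
            simp only [Finset.mem_singleton] at hvp
            have h1 : 0 < G.dist p v := hconn.pos_dist_of_ne (fun h => hvp h.symm)
            have h2 : G.dist u v ≤ D := hdiam u v
            have h3 : G.dist u p ≤ D := hdiam u p
            omega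
          simpa using Finset.card_le_card hsub
        · -- main work
          set E := D - G.dist u p with hEdef
          have hE1 : 1 ≤ E := Nat.one_le_iff_ne_zero.mpr hE0
          have hupD : G.dist u p ≤ D := hdiam u p
          set Aep := (A p).erase p with hAep
          have hBv : ∀ v ∈ Aep, ∃ q,
              (q ∈ S ∧ q ≠ p ∧ G.dist u p + G.dist p q = G.dist u q ∧
                G.dist u q + G.dist q v = G.dist u v) ∧
              (∀ z, z ∈ S → z ≠ p → (G.dist u p + G.dist p z = G.dist u z) →
                (G.dist u z + G.dist z v = G.dist u v) → G.dist u q ≤ G.dist u z) := by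
            intro v hv
            rw [hAep, Finset.mem_erase] at hv
            obtain ⟨hvp, hvA⟩ := hv
            rw [hA, Finset.mem_filter] at hvA
            obtain ⟨hvS, hbtw⟩ := hvA
            classical
            set B : Finset V := S.filter (fun z => z ≠ p ∧
              G.dist u p + G.dist p z = G.dist u z ∧
              G.dist u z + G.dist z v = G.dist u v) with hB
            have hvB : v ∈ B := by
              rw [hB, Finset.mem_filter]
              exact ⟨hvS, hvp, hbtw, by simp [SimpleGraph.dist_self]⟩
            obtain ⟨q, hqB, hqmin⟩ := B.exists_min_image (fun z => G.dist u z) ⟨v, hvB⟩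
            rw [hB, Finset.mem_filter] at hqB
            refine ⟨q, ⟨hqB.1, hqB.2.1, hqB.2.2.1, hqB.2.2.2⟩, ?_⟩
            intro z hz1 hz2 hz3 hz4
            exact hqmin z (by rw [hB, Finset.mem_filter]; exact ⟨hz1, hz2, hz3, hz4⟩)
          choose f hf1 hf2 using hBv
          set T : Finset V := Aep.attach.image (fun x => f x.1 x.2) with hT
          have hTprop : ∀ q ∈ T, q ∈ S ∧ q ≠ p ∧
              G.dist u p + G.dist p q = G.dist u q ∧
              (∀ z ∈ S, z ≠ p → z ≠ q → G.dist p z + G.dist z q ≠ G.dist p q) := by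
            intro q hq
            rw [hT, Finset.mem_image] at hq
            obtain ⟨x, -, hxq⟩ := hq
            obtain ⟨hqS, hqp, hbtw_pq, hbtw_qv⟩ := hf1 x.1 x.2
            rw [hxq] at hqS hqp hbtw_pq hbtw_qv
            refine ⟨hqS, hqp, hbtw_pq, ?_⟩
            intro z hzS hzp hzq hzbetween
            have t1 : G.dist u z ≤ G.dist u p + G.dist p z := hconn.dist_triangle
            have t2 : G.dist u q ≤ G.dist u z + G.dist z q := hconn.dist_triangle
            have t3 : G.dist z x.1 ≤ G.dist z q + G.dist q x.1 := hconn.dist_triangle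
            have t4 : G.dist u x.1 ≤ G.dist u z + G.dist z x.1 := hconn.dist_triangle
            have huz : G.dist u p + G.dist p z = G.dist u z := by omega
            have hzv : G.dist u z + G.dist z x.1 = G.dist u x.1 := by omega
            have hmin := hf2 x.1 x.2 z hzS hzp huz hzv
            rw [hxq] at hmin
            have hposzq : 0 < G.dist z q := hconn.pos_dist_of_ne hzq
            omega
          -- (1) covering
          have hsub : A p ⊆ insert p (T.biUnion (fun q => A q)) := by
            intro v hv
            by_cases hvp : v = p
            · simp [hvp]
            · have hvAep : v ∈ Aep := by
                rw [hAep, Finset.mem_erase]; exact ⟨hvp, hv⟩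
              obtain ⟨hqS, hqp, hbtw_pq, hbtw_qv⟩ := hf1 v hvAep
              refine Finset.mem_insert.mpr (Or.inr (Finset.mem_biUnion.mpr
                ⟨f v hvAep, ?_, ?_⟩))
              · rw [hT, Finset.mem_image]
                exact ⟨⟨v, hvAep⟩, Finset.mem_attach _ _, rfl⟩
              · rw [hA, Finset.mem_filter]
                rw [hA, Finset.mem_filter] at hv
                exact ⟨hv.1, hbtw_qv⟩
          have hcard1 : (A p).card ≤ 1 + ∑ q ∈ T, (A q).card := by
            calc (A p).card ≤ (insert p (T.biUnion (fun q => A q))).card :=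
                  Finset.card_le_card hsub
              _ ≤ (T.biUnion (fun q => A q)).card + 1 := Finset.card_insert_le _ _
              _ ≤ (∑ q ∈ T, (A q).card) + 1 := by
                  exact Nat.add_le_add_right (Finset.card_biUnion_le) 1
              _ = 1 + ∑ q ∈ T, (A q).card := by omega
          -- (2) weight bound
          have hTsub : T ⊆ S.erase p := by
            intro q hq
            obtain ⟨hqS, hqp, -, -⟩ := hTprop q hq
            exact Finset.mem_erase.mpr ⟨hqp, hqS⟩
          have hsum : ∑ q ∈ T, 2 * (1 / 2 : ℝ) ^ (G.dist p q) < 1 := by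
            have h1 : ∑ q ∈ T, 2 * (1 / 2 : ℝ) ^ (G.dist p q) ≤
                ∑ q ∈ T, (if distDel G (↑(S.erase p)) p q = ⊤ then (0:ℝ)
                  else 2 * (1 / 2 : ℝ) ^ (distDel G (↑(S.erase p)) p q).toNat) := by
              apply Finset.sum_le_sum
              intro q hq
              obtain ⟨hqS, hqp, -, hfree⟩ := hTprop q hq
              exact summand_ge hconn S hqS hqp hfree
            have h2 : ∑ q ∈ T, (if distDel G (↑(S.erase p)) p q = ⊤ then (0:ℝ)
                  else 2 * (1 / 2 : ℝ) ^ (distDel G (↑(S.erase p)) p q).toNat) ≤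
                expW G (S.erase p) p := by
              apply Finset.sum_le_sum_of_subset_of_nonneg hTsub
              intro v _ _
              split
              · exact le_rfl
              · positivity
            have h3 : expW G (S.erase p) p < 1 := hS p hp
            linarith
          -- (4)+(5)
          have hIH : ∀ q ∈ T, (A q).card ≤ 2 ^ (D - G.dist u q) := by
            intro q hq
            obtain ⟨hqS, hqp, hbtw_pq, -⟩ := hTprop q hq
            apply ih q hqS
            have hpos : 0 < G.dist p q := hconn.pos_dist_of_ne (fun h => hqp h.symm)
            omega
          have hkey : ∀ q ∈ T, ((A q).card : ℝ) ≤
              (2:ℝ) ^ (E - 1) * (2 * (1 / 2 : ℝ) ^ (G.dist p q)) := by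
            intro q hq
            obtain ⟨hqS, hqp, hbtw_pq, -⟩ := hTprop q hq
            have hpos : 0 < G.dist p q := hconn.pos_dist_of_ne (fun h => hqp h.symm)
            have huqD : G.dist u q ≤ D := hdiam u q
            have hccast : ((A q).card : ℝ) ≤ (2:ℝ) ^ (D - G.dist u q) := by
              have := hIH q hq
              calc ((A q).card : ℝ) ≤ ((2 ^ (D - G.dist u q) : ℕ) : ℝ) := by
                    exact_mod_cast this
                _ = (2:ℝ) ^ (D - G.dist u q) := by push_cast; ring
            have hexp : (2:ℝ) ^ (D - G.dist u q) =
                (2:ℝ) ^ (E - 1) * (2 * (1 / 2 : ℝ) ^ (G.dist p q)) := by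
              have h2 : (2:ℝ) ^ (D - G.dist u q) * (2:ℝ) ^ (G.dist p q) =
                  (2:ℝ) ^ (E - 1) * 2 := by
                rw [← pow_add, ← pow_succ]
                congr 1
                omega
              have hne : ((2:ℝ) ^ (G.dist p q)) ≠ 0 := by positivity
              field_simp at h2 ⊢
              rw [← h2, one_div, inv_pow, mul_inv_cancel_right₀ hne]
            linarith [hccast, hexp.symm.le]
          have hsum2 : (∑ q ∈ T, ((A q).card : ℝ)) < (2:ℝ) ^ (E - 1) := by
            calc (∑ q ∈ T, ((A q).card : ℝ)) ≤
                ∑ q ∈ T, (2:ℝ) ^ (E - 1) * (2 * (1 / 2 : ℝ) ^ (G.dist p q)) :=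
                  Finset.sum_le_sum hkey
              _ = (2:ℝ) ^ (E - 1) * ∑ q ∈ T, 2 * (1 / 2 : ℝ) ^ (G.dist p q) := by
                  rw [Finset.mul_sum]
              _ < (2:ℝ) ^ (E - 1) * 1 := by
                  apply mul_lt_mul_of_pos_left hsum
                  positivity
              _ = (2:ℝ) ^ (E - 1) := by ring
          have hsumnat : (∑ q ∈ T, (A q).card) < 2 ^ (E - 1) := by
            have : ((∑ q ∈ T, (A q).card : ℕ) : ℝ) < ((2 ^ (E - 1) : ℕ) : ℝ) := by
              push_cast
              exact hsum2
            exact_mod_cast this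
          have hfin : 2 ^ E = 2 * 2 ^ (E - 1) := by
            conv_lhs => rw [show E = (E - 1) + 1 by omega]
            rw [pow_succ]
            ring
          have hpow1 : 1 ≤ 2 ^ (E - 1) := Nat.one_le_two_pow
          omega
  have hAu : A u = S := by
    rw [hA]
    apply Finset.filter_true_of_mem
    intro v _
    simp [SimpleGraph.dist_self]
  have := main D u hu (by omega)
  rw [hAu, SimpleGraph.dist_self] at this
  simpa using this

section TreeLemmas

variable {V : Type*} {G : SimpleGraph V} {r : V}

-- In an acyclic connected graph, a vertex has at most one neighbor closer to r.
lemma closer_unique (hconn : G.Connected) (hacyc : G.IsAcyclic)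
    {x y₁ y₂ : V} (h₁ : G.Adj x y₁) (h₂ : G.Adj x y₂)
    (hd₁ : G.dist r y₁ < G.dist r x) (hd₂ : G.dist r y₂ < G.dist r x) : y₁ = y₂ := by
  have pu := SimpleGraph.isAcyclic_iff_path_unique.mp hacyc
  obtain ⟨P₁, hP₁path, hP₁len⟩ := hconn.exists_path_of_dist r y₁
  obtain ⟨P₂, hP₂path, hP₂len⟩ := hconn.exists_path_of_dist r y₂
  have hx₁ : x ∉ P₁.support := by
    intro hx
    have := between_of_mem_support hconn P₁ hP₁len hx
    have hpos : 0 < G.dist x y₁ := hconn.pos_dist_of_ne h₁.ne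
    omega
  have hx₂ : x ∉ P₂.support := by
    intro hx
    have := between_of_mem_support hconn P₂ hP₂len hx
    have hpos : 0 < G.dist x y₂ := hconn.pos_dist_of_ne h₂.ne
    omega
  have hW₁path : (P₁.concat h₁.symm).IsPath := by
    rw [← SimpleGraph.Walk.isPath_reverse_iff, SimpleGraph.Walk.reverse_concat]
    exact SimpleGraph.Walk.IsPath.cons hP₁path.reverse
      (by rwa [SimpleGraph.Walk.support_reverse, List.mem_reverse])
  have hW₂path : (P₂.concat h₂.symm).IsPath := by
    rw [← SimpleGraph.Walk.isPath_reverse_iff, SimpleGraph.Walk.reverse_concat]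
    exact SimpleGraph.Walk.IsPath.cons hP₂path.reverse
      (by rwa [SimpleGraph.Walk.support_reverse, List.mem_reverse])
  have hWeq : (⟨P₁.concat h₁.symm, hW₁path⟩ : G.Path r x) = ⟨P₂.concat h₂.symm, hW₂path⟩ :=
    pu _ _
  have hWeq' : (P₁.concat h₁.symm) = (P₂.concat h₂.symm) := congrArg Subtype.val hWeq
  have hrev : (P₁.concat h₁.symm).reverse = (P₂.concat h₂.symm).reverse := by rw [hWeq']
  rw [SimpleGraph.Walk.reverse_concat, SimpleGraph.Walk.reverse_concat] at hrev
  have := congrArg (fun (W : G.Walk x r) => W.getVert 1) hrev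
  simpa [SimpleGraph.Walk.getVert_cons_succ, SimpleGraph.Walk.getVert_zero] using this

-- No two adjacent vertices are at the same distance from r.
lemma no_equal_dist (hconn : G.Connected) (hacyc : G.IsAcyclic)
    {x y : V} (h : G.Adj x y) : G.dist r x ≠ G.dist r y := by
  intro heq
  have pu := SimpleGraph.isAcyclic_iff_path_unique.mp hacyc
  obtain ⟨P, hPpath, hPlen⟩ := hconn.exists_path_of_dist r x
  obtain ⟨Q, hQpath, hQlen⟩ := hconn.exists_path_of_dist r y
  have hx : x ∉ Q.support := by
    intro hx
    have hbtw := between_of_mem_support hconn Q hQlen hx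
    have : G.dist x y = 0 := by omega
    exact h.ne (hconn.dist_eq_zero_iff.mp this)
  have hWpath : (Q.concat h.symm).IsPath := by
    rw [← SimpleGraph.Walk.isPath_reverse_iff, SimpleGraph.Walk.reverse_concat]
    exact SimpleGraph.Walk.IsPath.cons hQpath.reverse
      (by rwa [SimpleGraph.Walk.support_reverse, List.mem_reverse])
  have hWeq : (⟨P, hPpath⟩ : G.Path r x) = ⟨Q.concat h.symm, hWpath⟩ := pu _ _
  have hWeq' : P = Q.concat h.symm := congrArg Subtype.val hWeq
  have hlen := congrArg SimpleGraph.Walk.length hWeq'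
  rw [SimpleGraph.Walk.length_concat, hPlen, hQlen] at hlen
  omega

end TreeLemmas

section TreeStructure

variable {V : Type*} [Fintype V] {G : SimpleGraph V} {r : V} {d : ℕ}

lemma leaf_dist (hleaf : ∀ v : V, (G.neighborSet v).ncard = 1 → G.edist r v = (d : ℕ∞))
    {v : V} (hv : (G.neighborSet v).ncard = 1) : G.dist r v = d := by
  rw [SimpleGraph.dist, hleaf v hv]
  exact ENat.toNat_coe d

lemma ecc_le (hconn : G.Connected) (hacyc : G.IsAcyclic)
    (hleaf : ∀ v : V, (G.neighborSet v).ncard = 1 → G.edist r v = (d : ℕ∞))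
    (hdeg : ∀ v : V, (G.neighborSet v).ncard ≠ 1 → (G.neighborSet v).ncard = 6) :
    ∀ x : V, G.dist r x ≤ d := by
  have : Nonempty V := hconn.nonempty
  obtain ⟨x0, -, hmax⟩ := Finset.exists_max_image Finset.univ (G.dist r)
    ⟨Classical.arbitrary V, Finset.mem_univ _⟩
  have hx0 : ∀ y : V, G.dist r y ≤ G.dist r x0 := fun y => hmax y (Finset.mem_univ y)
  by_cases hx0leaf : (G.neighborSet x0).ncard = 1
  · have hd : G.dist r x0 = d := leaf_dist hleaf hx0leaf
    intro x
    exact hd ▸ hx0 x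
  · exfalso
    have h6 : (G.neighborSet x0).ncard = 6 := hdeg x0 hx0leaf
    have h2 : 1 < (G.neighborSet x0).ncard := by omega
    rw [Set.one_lt_ncard ((G.neighborSet x0).toFinite)] at h2
    obtain ⟨y₁, hy₁, y₂, hy₂, hne⟩ := h2
    have hadj₁ : G.Adj x0 y₁ := hy₁
    have hadj₂ : G.Adj x0 y₂ := hy₂
    have hlt₁ : G.dist r y₁ < G.dist r x0 :=
      lt_of_le_of_ne (hx0 y₁) (fun h => no_equal_dist hconn hacyc hadj₁ h.symm)
    have hlt₂ : G.dist r y₂ < G.dist r x0 :=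
      lt_of_le_of_ne (hx0 y₂) (fun h => no_equal_dist hconn hacyc hadj₂ h.symm)
    exact hne (closer_unique hconn hacyc hadj₁ hadj₂ hlt₁ hlt₂)

lemma layer_growth (hconn : G.Connected) (hacyc : G.IsAcyclic)
    (hleaf : ∀ v : V, (G.neighborSet v).ncard = 1 → G.edist r v = (d : ℕ∞))
    (hdeg : ∀ v : V, (G.neighborSet v).ncard ≠ 1 → (G.neighborSet v).ncard = 6) :
    ∀ k : ℕ, k ≤ d → 5 ^ k ≤ (Finset.univ.filter (fun x => G.dist r x = k)).card := by
  classical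
  set L : ℕ → Finset V := fun k => Finset.univ.filter (fun x => G.dist r x = k) with hL
  intro k
  induction k with
  | zero =>
      intro _
      have hr : r ∈ L 0 := by
        rw [hL, Finset.mem_filter]
        exact ⟨Finset.mem_univ r, SimpleGraph.dist_self⟩
      rw [pow_zero]
      exact Finset.card_pos.mpr ⟨r, hr⟩
  | succ k ih =>
      intro hk1
      have hk : k ≤ d := by omega
      have ihk : 5 ^ k ≤ (L k).card := ih hk
      set N : V → Finset V := fun x => ((G.neighborSet x).toFinite).toFinset with hN
      set Nup : V → Finset V := fun x => (N x).filter (fun y => G.dist r y = k + 1) with hNup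
      -- each x in L k has at least 5 upward neighbors
      have hup : ∀ x ∈ L k, 5 ≤ (Nup x).card := by
        intro x hx
        rw [hL, Finset.mem_filter] at hx
        have hdx : G.dist r x = k := hx.2
        have hnotleaf : (G.neighborSet x).ncard ≠ 1 := by
          intro hleafx
          have := leaf_dist hleaf hleafx
          omega
        have h6 : (N x).card = 6 := by
          rw [hN]
          rw [← Set.ncard_eq_toFinset_card (G.neighborSet x) ((G.neighborSet x).toFinite)]
          exact hdeg x hnotleaf
        have hdown : ((N x).filter (fun y => ¬(G.dist r y = k + 1))).card ≤ 1 := by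
          apply Finset.card_le_one.mpr
          intro y₁ hy₁ y₂ hy₂
          rw [Finset.mem_filter] at hy₁ hy₂
          have hadj₁ : G.Adj x y₁ := by
            have := hy₁.1; rw [hN, Set.Finite.mem_toFinset] at this; exact this
          have hadj₂ : G.Adj x y₂ := by
            have := hy₂.1; rw [hN, Set.Finite.mem_toFinset] at this; exact this
          have hb₁ : G.dist r y₁ ≤ k + 1 := by
            have ht := hconn.dist_triangle (u := r) (v := x) (w := y₁)
            have : G.dist x y₁ ≤ 1 := by
              have := SimpleGraph.dist_le hadj₁.toWalk
              simpa using this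
            omega
          have hb₂ : G.dist r y₂ ≤ k + 1 := by
            have ht := hconn.dist_triangle (u := r) (v := x) (w := y₂)
            have : G.dist x y₂ ≤ 1 := by
              have := SimpleGraph.dist_le hadj₂.toWalk
              simpa using this
            omega
          have hne₁ : G.dist r y₁ ≠ k := by
            have := no_equal_dist (r := r) hconn hacyc hadj₁
            omega
          have hne₂ : G.dist r y₂ ≠ k := by
            have := no_equal_dist (r := r) hconn hacyc hadj₂
            omega
          have hlt₁ : G.dist r y₁ < G.dist r x := by
            have := hy₁.2; omega
          have hlt₂ : G.dist r y₂ < G.dist r x := by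
            have := hy₂.2; omega
          exact closer_unique hconn hacyc hadj₁ hadj₂ hlt₁ hlt₂
        have hsplit := Finset.card_filter_add_card_filter_not
          (s := N x) (p := fun y => G.dist r y = k + 1)
        have hNupx : (Nup x).card = ((N x).filter (fun y => G.dist r y = k + 1)).card := rfl
        omega
      -- disjointness
      have hdisj : ∀ x₁ ∈ L k, ∀ x₂ ∈ L k, x₁ ≠ x₂ → Disjoint (Nup x₁) (Nup x₂) := by
        intro x₁ hx₁ x₂ hx₂ hne
        rw [Finset.disjoint_left]
        intro y hy₁ hy₂
        rw [hNup, Finset.mem_filter] at hy₁ hy₂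
        have hadj₁ : G.Adj y x₁ := by
          have := hy₁.1; rw [hN, Set.Finite.mem_toFinset] at this; exact this.symm
        have hadj₂ : G.Adj y x₂ := by
          have := hy₂.1; rw [hN, Set.Finite.mem_toFinset] at this; exact this.symm
        rw [hL, Finset.mem_filter] at hx₁ hx₂
        have hlt₁ : G.dist r x₁ < G.dist r y := by
          have := hx₁.2; have := hy₁.2; omega
        have hlt₂ : G.dist r x₂ < G.dist r y := by
          have := hx₂.2; have := hy₂.2; omega
        exact hne (closer_unique hconn hacyc hadj₁ hadj₂ hlt₁ hlt₂)
      have hsubset : (L k).biUnion Nup ⊆ L (k + 1) := by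
        intro y hy
        rw [Finset.mem_biUnion] at hy
        obtain ⟨x, -, hyx⟩ := hy
        rw [hNup, Finset.mem_filter] at hyx
        rw [hL, Finset.mem_filter]
        exact ⟨Finset.mem_univ y, hyx.2⟩
      calc 5 ^ (k + 1) = 5 * 5 ^ k := by ring
        _ ≤ 5 * (L k).card := by omega
        _ = ∑ _x ∈ L k, 5 := by rw [Finset.sum_const]; ring
        _ ≤ ∑ x ∈ L k, (Nup x).card := Finset.sum_le_sum hup
        _ = ((L k).biUnion Nup).card := (Finset.card_biUnion hdisj).symm
        _ ≤ (L (k + 1)).card := Finset.card_le_card hsubset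

end TreeStructure


lemma expIndepNum_le {V : Type} [Fintype V] {G : SimpleGraph V} {r : V} {d : ℕ}
    (hT : IsTreeTDelta G r 6 d) : expIndepNum V G ≤ 2 ^ (2 * d) := by
  obtain ⟨hconn, hacyc, hleaf, hdeg⟩ := hT
  have hecc : ∀ x : V, G.dist r x ≤ d := ecc_le hconn hacyc hleaf hdeg
  have hdiam : ∀ x y : V, G.dist x y ≤ 2 * d := by
    intro x y
    have ht := hconn.dist_triangle (u := x) (v := r) (w := y)
    have h1 : G.dist x r ≤ d := by rw [SimpleGraph.dist_comm]; exact hecc x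
    have h2 : G.dist r y ≤ d := hecc y
    omega
  apply csSup_le'
  intro m hm
  obtain ⟨S, hSindep, rfl⟩ := hm
  exact card_expIndep_le hconn hSindep hdiam

lemma cardV_ge {V : Type} [Fintype V] {G : SimpleGraph V} {r : V} {d : ℕ}
    (hT : IsTreeTDelta G r 6 d) : 5 ^ d ≤ Fintype.card V := by
  obtain ⟨hconn, hacyc, hleaf, hdeg⟩ := hT
  have := layer_growth hconn hacyc hleaf hdeg d le_rfl
  calc 5 ^ d ≤ (Finset.univ.filter (fun x => G.dist r x = d)).card := this
    _ ≤ Finset.univ.card := Finset.card_le_card (Finset.filter_subset _ _)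
    _ = Fintype.card V := Finset.card_univ

/-- There is no constant `c > 0` with `α_e(T(6,d)) ≥ c·n(T(6,d)) + 1` for every positive
integer `d`: for every `c > 0` there is a positive integer `d` such that every finite
tree isomorphic to `T(6,d)` satisfies `α_e(T) < c·n(T) + 1`. -/
theorem stmt8 :
    ∀ c : ℝ, 0 < c → ∃ d : ℕ, 1 ≤ d ∧
      ∀ (V : Type) [Fintype V] (G : SimpleGraph V) (r : V),
        IsTreeTDelta G r 6 d →
        (expIndepNum V G : ℝ) < c * (Fintype.card V : ℝ) + 1 := by
  intro c hc
  obtain ⟨k, hk⟩ := pow_unbounded_of_one_lt (1 / c) (show (1:ℝ) < 5/4 by norm_num)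
  refine ⟨k + 1, by omega, ?_⟩
  set d := k + 1 with hd
  have hkey : (4 : ℝ) ^ d < c * 5 ^ d := by
    have h54 : (1 / c : ℝ) < (5 / 4) ^ d := by
      calc (1 / c : ℝ) < (5 / 4) ^ k := hk
        _ ≤ (5 / 4) ^ d := by
          apply pow_le_pow_right₀ (by norm_num)
          omega
    have h4pos : (0:ℝ) < 4 ^ d := by positivity
    have hdiv : ((5:ℝ)/4) ^ d = 5 ^ d / 4 ^ d := by
      rw [div_pow]
    rw [hdiv] at h54
    rw [div_lt_div_iff₀ (by positivity) h4pos] at h54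
    linarith
  intro V _ G r hT
  have h1 : (expIndepNum V G : ℝ) ≤ (4 : ℝ) ^ d := by
    have := expIndepNum_le hT
    calc (expIndepNum V G : ℝ) ≤ ((2 ^ (2 * d) : ℕ) : ℝ) := by exact_mod_cast this
      _ = (4 : ℝ) ^ d := by
        push_cast
        rw [pow_mul]
        norm_num
  have h2 : (5 : ℝ) ^ d ≤ (Fintype.card V : ℝ) := by
    have := cardV_ge hT
    calc (5 : ℝ) ^ d = ((5 ^ d : ℕ) : ℝ) := by push_cast; ring
      _ ≤ (Fintype.card V : ℝ) := by exact_mod_cast this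
  have h3 : c * (5:ℝ) ^ d ≤ c * (Fintype.card V : ℝ) :=
    mul_le_mul_of_nonneg_left h2 hc.le
  linarith
end
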